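/- In the hitting-set reduction database I, for every hitting set H of S = {S₁, …, S_m} with |H| ≤ k, the path concept ∃r.C_n (where C₀ = A, C_i = ∃r.C_{i−1} if n−i+1 ∉ H, and C_i = ∃s.∃s.C_{i−1} if n−i+1 ∈ H) has size exactly n + |H| + 2 and fits {a}, {b} in I. -/

import Mathlib

structure DB (CN RN Ind : Type) where
  concFact : CN → Ind → Prop
  roleFact : RN → Ind → Ind → Prop
  adom : Set Ind

def DB.succ {CN RN Ind : Type} (I : DB CN RN Ind) (r : RN) (a : Ind) : Set Ind :=
  {b | I.roleFact r a b}

def IsALCQBisim {CN RN Ind : Type} (I : DB CN RN Ind) (S : Ind → Ind → Prop) : Prop :=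
  (∀ a b, S a b → a ∈ I.adom ∧ b ∈ I.adom) ∧
  ∀ a b, S a b →
    (∀ A, I.concFact A a ↔ I.concFact A b) ∧
    (∀ r, ∀ D ⊆ I.succ r a, ∃ E ⊆ I.succ r b, ∃ f : Ind → Ind,
        Set.BijOn f D E ∧ ∀ d ∈ D, S d (f d)) ∧
    (∀ r, ∀ E ⊆ I.succ r b, ∃ D ⊆ I.succ r a, ∃ f : Ind → Ind,
        Set.BijOn f D E ∧ ∀ d ∈ D, S d (f d))

/-- Individuals of the hitting-set reduction database: roots `a`, `b`, the
`a`-path nodes `aᵢ` with detour nodes `aᵢ'`, and for each `j` the `b_j`-path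
nodes `b_{j,i}` with detour nodes `b_{j,i}'`. -/
inductive HInd (m n : ℕ) : Type where
  | rootA : HInd m n
  | rootB : HInd m n
  | an (i : Fin (n + 1)) : HInd m n
  | ap (i : Fin n) : HInd m n
  | bn (j : Fin m) (i : Fin (n + 1)) : HInd m n
  | bp (j : Fin m) (i : Fin n) : HInd m n

/-- The hitting-set reduction database for sets `S j ⊆ {1,…,n}` (a position
`i : Fin n` represents the number `i+1`). Role `true` is `r`, role `false`
is `s`; the single concept name `A` holds at the final path nodes. The `b_j`-path
has the `s`-detour at position `i` exactly when `i ∉ S j`. -/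
def hitDB (m n : ℕ) (S : Fin m → Finset (Fin n)) : DB Unit Bool (HInd m n) where
  concFact := fun _ x => x = .an (Fin.last n) ∨ ∃ j, x = .bn j (Fin.last n)
  roleFact := fun rr x y =>
    if rr then
      (x = .rootA ∧ (y = HInd.an 0 ∨ ∃ j, y = HInd.bn j 0)) ∨
      (x = .rootB ∧ ∃ j, y = HInd.bn j 0) ∨
      (∃ i : Fin n, x = HInd.an i.castSucc ∧ y = HInd.an i.succ) ∨
      (∃ (j : Fin m) (i : Fin n), x = HInd.bn j i.castSucc ∧ y = HInd.bn j i.succ)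
    else
      (∃ i : Fin n, x = HInd.an i.castSucc ∧ y = HInd.ap i) ∨
      (∃ i : Fin n, x = HInd.ap i ∧ y = HInd.an i.succ) ∨
      (∃ (j : Fin m) (i : Fin n), i ∉ S j ∧
        ((x = HInd.bn j i.castSucc ∧ y = HInd.bp j i) ∨
         (x = HInd.bp j i ∧ y = HInd.bn j i.succ)))
  adom := Set.univ

/-- Path concepts: `A` and `∃w.C` for `w` a role name. -/
inductive PC (CN RN : Type) : Type where
  | atom (A : CN) : PC CN RN
  | ex (r : RN) (C : PC CN RN) : PC CN RN

def PC.sem {CN RN Ind : Type} (I : DB CN RN Ind) : PC CN RN → Set Ind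
  | .atom A => {a ∈ I.adom | I.concFact A a}
  | .ex r C => {a ∈ I.adom | ∃ b ∈ I.succ r a, b ∈ C.sem I}

def PC.size {CN RN : Type} : PC CN RN → ℕ
  | .atom _ => 1
  | .ex _ C => 1 + C.size

/-- `Cpath n H i` is the concept `C_i`: `C_0 = A`, and `C_i = ∃s.∃s.C_{i-1}` if
position `n−i+1` belongs to `H` (i.e. the Fin-index `n−i` is in `H`),
`C_i = ∃r.C_{i-1}` otherwise. -/
def Cpath (n : ℕ) (H : Finset (Fin n)) : ℕ → PC Unit Bool
  | 0 => .atom ()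
  | (i + 1) =>
      if h : n - (i + 1) < n then
        if (⟨n - (i + 1), h⟩ : Fin n) ∈ H then
          .ex false (.ex false (Cpath n H i))
        else .ex true (Cpath n H i)
      else .ex true (Cpath n H i)

-- size lemma
lemma size_Cpath (n : ℕ) (H : Finset (Fin n)) :
    ∀ i ≤ n, (Cpath n H i).size = i + (H.filter fun x : Fin n => n - i ≤ (x : ℕ)).card + 1 := by
  intro i
  induction i with
  | zero =>
    intro _
    have : (H.filter fun x : Fin n => n - 0 ≤ (x : ℕ)) = ∅ := by
      apply Finset.filter_eq_empty_iff.mpr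
      intro x _
      have := x.isLt
      omega
    simp only [Nat.sub_zero] at this
    simp [Cpath, PC.size, this]
  | succ i ih =>
    intro hi
    have h : n - (i + 1) < n := by omega
    set c : Fin n := ⟨n - (i + 1), h⟩ with hc
    rw [Cpath, dif_pos h]
    by_cases hH : c ∈ H
    · rw [if_pos hH]
      have hins : (H.filter fun x : Fin n => n - (i + 1) ≤ (x : ℕ))
          = insert c (H.filter fun x : Fin n => n - i ≤ (x : ℕ)) := by
        ext x
        simp only [Finset.mem_filter, Finset.mem_insert, Fin.ext_iff]
        have := x.isLt
        constructor
        · rintro ⟨hx, hle⟩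
          by_cases hx' : (x : ℕ) = n - (i + 1)
          · exact Or.inl (by simp [hc, hx'])
          · exact Or.inr ⟨hx, by omega⟩
        · rintro (hx | ⟨hx, hle⟩)
          · rw [show x = c from Fin.ext hx]
            exact ⟨hH, by simp [hc]⟩
          · exact ⟨hx, by omega⟩
      have hnot : c ∉ (H.filter fun x : Fin n => n - i ≤ (x : ℕ)) := by
        simp [hc]; intro _; omega
      rw [hins, Finset.card_insert_of_notMem hnot]
      have := ih (by omega)
      simp only [PC.size, this]
      omega
    · rw [if_neg hH]
      have heq : (H.filter fun x : Fin n => n - (i + 1) ≤ (x : ℕ))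
          = (H.filter fun x : Fin n => n - i ≤ (x : ℕ)) := by
        ext x
        simp only [Finset.mem_filter, and_congr_right_iff]
        intro hx
        have := x.isLt
        constructor
        · intro hle
          by_cases hx' : (x : ℕ) = n - (i + 1)
          · exact absurd (show x = c from Fin.ext (by simp [hc, hx'])) (by rintro rfl; exact hH hx)
          · omega
        · intro; omega
      rw [heq]
      have := ih (by omega)
      simp only [PC.size, this]
      omega

lemma mem_an (m n : ℕ) (S : Fin m → Finset (Fin n)) (H : Finset (Fin n)) :
    ∀ i, i ≤ n →
      HInd.an ⟨n - i, Nat.lt_succ_of_le (Nat.sub_le n i)⟩ ∈ (Cpath n H i).sem (hitDB m n S) := by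
  intro i
  induction i with
  | zero =>
    intro _
    simp only [Cpath, PC.sem, hitDB, Set.mem_setOf_eq, Set.mem_univ, true_and, Set.sep_setOf]
    left
    congr 1
  | succ i ih =>
    intro hi
    have h : n - (i + 1) < n := by omega
    set c : Fin n := ⟨n - (i + 1), h⟩ with hc
    have hcs : (HInd.an c.castSucc : HInd m n)
        = HInd.an ⟨n - (i + 1), Nat.lt_succ_of_le (Nat.sub_le n (i+1))⟩ := by
      congr 1
    have hsucc : (HInd.an c.succ : HInd m n)
        = HInd.an ⟨n - i, Nat.lt_succ_of_le (Nat.sub_le n i)⟩ := by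
      congr 1
      ext
      simp [hc, Fin.succ]
      omega
    rw [Cpath, dif_pos h, ← hc]
    by_cases hH : c ∈ H
    · rw [if_pos hH, ← hcs]
      refine ⟨Set.mem_univ _, HInd.ap c, ?_, Set.mem_univ _, HInd.an c.succ, ?_, ?_⟩
      · show (hitDB m n S).roleFact false _ _
        simp only [hitDB, if_neg (by simp : ¬ (false = true))]
        exact Or.inl ⟨c, rfl, rfl⟩
      · show (hitDB m n S).roleFact false _ _
        simp only [hitDB, if_neg (by simp : ¬ (false = true))]
        exact Or.inr (Or.inl ⟨c, rfl, rfl⟩)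
      · rw [hsucc]; exact ih (by omega)
    · rw [if_neg hH, ← hcs]
      refine ⟨Set.mem_univ _, HInd.an c.succ, ?_, ?_⟩
      · show (hitDB m n S).roleFact true _ _
        simp only [hitDB, if_pos rfl]
        exact Or.inr (Or.inr (Or.inl ⟨c, rfl, rfl⟩))
      · rw [hsucc]; exact ih (by omega)

lemma role_bn_true (m n : ℕ) (S : Fin m → Finset (Fin n)) (j : Fin m) (w : Fin (n+1))
    (y : HInd m n) :
    (hitDB m n S).roleFact true (HInd.bn j w) y ↔
      ∃ i : Fin n, w = i.castSucc ∧ y = HInd.bn j i.succ := by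
  simp [hitDB]

lemma role_bn_false (m n : ℕ) (S : Fin m → Finset (Fin n)) (j : Fin m) (w : Fin (n+1))
    (y : HInd m n) :
    (hitDB m n S).roleFact false (HInd.bn j w) y ↔
      ∃ i : Fin n, i ∉ S j ∧ w = i.castSucc ∧ y = HInd.bp j i := by
  simp [hitDB]

lemma role_bp_false (m n : ℕ) (S : Fin m → Finset (Fin n)) (j : Fin m) (i : Fin n)
    (y : HInd m n) :
    (hitDB m n S).roleFact false (HInd.bp j i) y ↔ i ∉ S j ∧ y = HInd.bn j i.succ := by
  simp [hitDB]

lemma not_mem_bn (m n : ℕ) (S : Fin m → Finset (Fin n)) (H : Finset (Fin n)) :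
    ∀ i, i ≤ n → ∀ j : Fin m, (∃ x ∈ H, x ∈ S j ∧ n - i ≤ (x : ℕ)) →
      HInd.bn j ⟨n - i, Nat.lt_succ_of_le (Nat.sub_le n i)⟩ ∉ (Cpath n H i).sem (hitDB m n S) := by
  intro i
  induction i with
  | zero =>
    intro _ j hx _
    obtain ⟨x, _, _, hge⟩ := hx
    have := x.isLt
    omega
  | succ i ih =>
    intro hi j hx hmem
    obtain ⟨x, hxH, hxS, hge⟩ := hx
    have h : n - (i + 1) < n := by omega
    set c : Fin n := ⟨n - (i + 1), h⟩ with hc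
    have hcs : (HInd.bn j c.castSucc : HInd m n)
        = HInd.bn j ⟨n - (i + 1), Nat.lt_succ_of_le (Nat.sub_le n (i+1))⟩ := by congr 1
    have hsucc : (HInd.bn j c.succ : HInd m n)
        = HInd.bn j ⟨n - i, Nat.lt_succ_of_le (Nat.sub_le n i)⟩ := by
      congr 1
      ext
      simp [hc, Fin.succ]
      omega
    rw [Cpath, dif_pos h, ← hc] at hmem
    by_cases hH : c ∈ H
    · rw [if_pos hH] at hmem
      obtain ⟨-, y, hr1, -, z, hr2, hz⟩ := hmem
      have hr1' : (hitDB m n S).roleFact false (HInd.bn j c.castSucc) y := by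
        rw [hcs]; exact hr1
      rw [role_bn_false] at hr1'
      replace hr1 := hr1'
      obtain ⟨i', hi'S, hwi, rfl⟩ := hr1
      have hieq : i' = c := Fin.castSucc_injective _ hwi.symm
      subst hieq
      have hr2' : (hitDB m n S).roleFact false (HInd.bp j c) z := hr2
      rw [role_bp_false] at hr2'
      replace hr2 := hr2'
      obtain ⟨-, rfl⟩ := hr2
      rw [hsucc] at hz
      have hxc : (x : ℕ) ≠ n - (i + 1) := by
        intro hh
        have hxc' : x = c := Fin.ext hh
        exact hi'S (hxc' ▸ hxS)
      exact ih (by omega) j ⟨x, hxH, hxS, by omega⟩ hz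
    · rw [if_neg hH] at hmem
      obtain ⟨-, y, hr1, hy⟩ := hmem
      have hr1' : (hitDB m n S).roleFact true (HInd.bn j c.castSucc) y := by
        rw [hcs]; exact hr1
      rw [role_bn_true] at hr1'
      replace hr1 := hr1'
      obtain ⟨i', hwi, rfl⟩ := hr1
      have hieq : i' = c := Fin.castSucc_injective _ hwi.symm
      subst hieq
      rw [hsucc] at hy
      have hxc : (x : ℕ) ≠ n - (i + 1) := by
        intro hh
        have hxc' : x = c := Fin.ext hh
        exact hH (hxc' ▸ hxH)
      exact ih (by omega) j ⟨x, hxH, hxS, by omega⟩ hy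

lemma role_rootB (m n : ℕ) (S : Fin m → Finset (Fin n)) (y : HInd m n) :
    (hitDB m n S).roleFact true HInd.rootB y ↔ ∃ j, y = HInd.bn j 0 := by
  simp [hitDB]


/-- Every hitting set `H` of size at most `k` yields a path concept
`∃r.C_n` of size `n + |H| + 2` fitting `{a}, {b}` in the reduction database. -/
theorem stmt13 (m n k : ℕ) (S : Fin m → Finset (Fin n)) (H : Finset (Fin n))
    (hhit : ∀ j : Fin m, ∃ x ∈ H, x ∈ S j) (hcard : H.card ≤ k) :
    (PC.ex true (Cpath n H n)).size = n + H.card + 2 ∧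
    HInd.rootA ∈ (PC.ex true (Cpath n H n)).sem (hitDB m n S) ∧
    HInd.rootB ∉ (PC.ex true (Cpath n H n)).sem (hitDB m n S) := by
  refine ⟨?_, ?_, ?_⟩
  · have hs := size_Cpath n H n le_rfl
    have hfil : (H.filter fun x : Fin n => n - n ≤ (x : ℕ)) = H := by
      apply Finset.filter_true_of_mem
      intro x _
      omega
    rw [hfil] at hs
    simp only [PC.size, hs]
    try omega
  · have hmem := mem_an m n S H n le_rfl
    have h0 : (HInd.an ⟨n - n, Nat.lt_succ_of_le (Nat.sub_le n n)⟩ : HInd m n)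
        = HInd.an 0 := by
      congr 1
      ext
      simp
    rw [h0] at hmem
    refine ⟨Set.mem_univ _, HInd.an 0, ?_, hmem⟩
    show (hitDB m n S).roleFact true _ _
    exact Or.inl ⟨rfl, Or.inl rfl⟩
  · rintro ⟨-, y, hr, hy⟩
    have hr' : (hitDB m n S).roleFact true HInd.rootB y := hr
    rw [role_rootB] at hr'
    obtain ⟨j, rfl⟩ := hr'
    have h0 : (HInd.bn j (0 : Fin (n+1)) : HInd m n)
        = HInd.bn j ⟨n - n, Nat.lt_succ_of_le (Nat.sub_le n n)⟩ := by
      congr 1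
      ext
      simp
    rw [h0] at hy
    obtain ⟨x, hxH, hxS⟩ := hhit j
    exact not_mem_bn m n S H n le_rfl j ⟨x, hxH, hxS, by omega⟩ hy
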